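/- Let d be the largest eigenvalue of the adjacency matrix of the graph H₁^p. Then d > 2 and d⁶ − 8d⁴ + 17d² − 5 = 0; consequently d² is the largest root of x³ − 8x² + 17x − 5. -/

import Mathlib

/-- The edges of the extended Haagerup principal graph `H₁^p`, with vertices
`c₀,…,c₇,u₁,u₂,s₁,s₂,t₁,t₂` numbered `0,…,13`. -/
def H1edges : List (Fin 14 × Fin 14) :=
  [(0, 1), (1, 2), (2, 3), (3, 4), (4, 5), (5, 6), (6, 7),
   (7, 8), (7, 9), (8, 10), (9, 11), (10, 12), (11, 13)]

/-- The adjacency matrix of the extended Haagerup principal graph `H₁^p`. -/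
def H1adj : Matrix (Fin 14) (Fin 14) ℝ :=
  Matrix.of fun i j => if (i, j) ∈ H1edges ∨ (j, i) ∈ H1edges then 1 else 0

/-- An explicit eigenvector candidate for eigenvalue `t`. -/
def EHvec (t : ℝ) : Fin 14 → ℝ :=
  ![t^10 - 10*t^8 + 34*t^6 - 46*t^4 + 22*t^2 - 2,
    t^9 - 9*t^7 + 26*t^5 - 27*t^3 + 8*t,
    t^8 - 8*t^6 + 19*t^4 - 14*t^2 + 2,
    t^7 - 7*t^5 + 13*t^3 - 6*t,
    t^6 - 6*t^4 + 8*t^2 - 2,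
    t^5 - 5*t^3 + 4*t,
    t^4 - 4*t^2 + 2,
    t^3 - 2*t,
    t^2 - 1, t^2 - 1, t, t, 1, 1]


lemma EHvec_val (t : ℝ) :
    EHvec t 0 = t^10 - 10*t^8 + 34*t^6 - 46*t^4 + 22*t^2 - 2 ∧
    EHvec t 1 = t^9 - 9*t^7 + 26*t^5 - 27*t^3 + 8*t ∧
    EHvec t 2 = t^8 - 8*t^6 + 19*t^4 - 14*t^2 + 2 ∧
    EHvec t 3 = t^7 - 7*t^5 + 13*t^3 - 6*t ∧
    EHvec t 4 = t^6 - 6*t^4 + 8*t^2 - 2 ∧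
    EHvec t 5 = t^5 - 5*t^3 + 4*t ∧
    EHvec t 6 = t^4 - 4*t^2 + 2 ∧
    EHvec t 7 = t^3 - 2*t ∧
    EHvec t 8 = t^2 - 1 ∧ EHvec t 9 = t^2 - 1 ∧
    EHvec t 10 = t ∧ EHvec t 11 = t ∧ EHvec t 12 = 1 ∧ EHvec t 13 = 1 :=
  ⟨rfl, rfl, rfl, rfl, rfl, rfl, rfl, rfl, rfl, rfl, rfl, rfl, rfl, rfl⟩

set_option maxHeartbeats 1000000 in
lemma EHvec_eig (t : ℝ) (h : t^6 - 8*t^4 + 17*t^2 - 5 = 0) :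
    H1adj.mulVec (EHvec t) = t • EHvec t := by
  funext i
  fin_cases i <;>
    simp (config := { decide := true }) [H1adj, H1edges, Matrix.mulVec, dotProduct,
      Fin.sum_univ_succ, Fin.succ, (EHvec_val t).1, (EHvec_val t).2.1, (EHvec_val t).2.2.1,
      (EHvec_val t).2.2.2.1, (EHvec_val t).2.2.2.2.1, (EHvec_val t).2.2.2.2.2.1,
      (EHvec_val t).2.2.2.2.2.2.1, (EHvec_val t).2.2.2.2.2.2.2.1,
      (EHvec_val t).2.2.2.2.2.2.2.2.1, (EHvec_val t).2.2.2.2.2.2.2.2.2.1,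
      (EHvec_val t).2.2.2.2.2.2.2.2.2.2.1, (EHvec_val t).2.2.2.2.2.2.2.2.2.2.2.1,
      (EHvec_val t).2.2.2.2.2.2.2.2.2.2.2.2.1, (EHvec_val t).2.2.2.2.2.2.2.2.2.2.2.2.2,
      show ((⟨3, by norm_num⟩ : Fin 14)) = 3 by rfl,
      show ((⟨4, by norm_num⟩ : Fin 14)) = 4 by rfl,
      show ((⟨5, by norm_num⟩ : Fin 14)) = 5 by rfl,
      show ((⟨6, by norm_num⟩ : Fin 14)) = 6 by rfl,
      show ((⟨7, by norm_num⟩ : Fin 14)) = 7 by rfl,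
      show ((⟨8, by norm_num⟩ : Fin 14)) = 8 by rfl,
      show ((⟨9, by norm_num⟩ : Fin 14)) = 9 by rfl,
      show ((⟨10, by norm_num⟩ : Fin 14)) = 10 by rfl,
      show ((⟨11, by norm_num⟩ : Fin 14)) = 11 by rfl,
      show ((⟨12, by norm_num⟩ : Fin 14)) = 12 by rfl,
      show ((⟨13, by norm_num⟩ : Fin 14)) = 13 by rfl] <;>
    first
      | ring1
      | linear_combination (-(t*(t^2-1)*(t^2-2))) * h

lemma cubic_le_max (d x : ℝ) (hd4 : 4 < d^2)
    (hcube : (d^2)^3 - 8*(d^2)^2 + 17*(d^2) - 5 = 0)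
    (hx : x ^ 3 - 8 * x ^ 2 + 17 * x - 5 = 0) : x ≤ d ^ 2 := by
  by_contra hlt
  push_neg at hlt
  have hx4 : 4 < x := by linarith
  have key : (x - d^2) * (x^2 + x*d^2 + (d^2)^2 - 8*x - 8*d^2 + 17) = 0 := by
    linear_combination hx - hcube
  have hq : 0 < x^2 + x*d^2 + (d^2)^2 - 8*x - 8*d^2 + 17 := by
    nlinarith [sq_nonneg (x - 4), sq_nonneg (d^2 - 4),
      mul_pos (sub_pos.2 hx4) (sub_pos.2 hd4)]
  have := mul_pos (sub_pos.2 hlt) hq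
  linarith [key.le, key.ge]

set_option maxHeartbeats 1000000 in
/-- If `d` is the largest eigenvalue of the adjacency matrix of `H₁^p`, then `d > 2` and
`d⁶ − 8d⁴ + 17d² − 5 = 0`; consequently `d²` is the largest root of `x³ − 8x² + 17x − 5`. -/
theorem stmt_17 (d : ℝ)
    (hex : ∃ v : Fin 14 → ℝ, v ≠ 0 ∧ H1adj.mulVec v = d • v)
    (hmax : ∀ μ : ℝ, (∃ v : Fin 14 → ℝ, v ≠ 0 ∧ H1adj.mulVec v = μ • v) → μ ≤ d) :
    2 < d ∧ d ^ 6 - 8 * d ^ 4 + 17 * d ^ 2 - 5 = 0 ∧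
    ((d ^ 2) ^ 3 - 8 * (d ^ 2) ^ 2 + 17 * d ^ 2 - 5 = 0 ∧
      ∀ x : ℝ, x ^ 3 - 8 * x ^ 2 + 17 * x - 5 = 0 → x ≤ d ^ 2) := by
  -- Step 1: the cubic has a root r in (4,5]
  obtain ⟨r, hrmem, hr⟩ : ∃ r ∈ Set.Icc (4:ℝ) 5, r^3 - 8*r^2 + 17*r - 5 = 0 := by
    have hcont : ContinuousOn (fun x : ℝ => x^3 - 8*x^2 + 17*x - 5) (Set.Icc 4 5) := by
      fun_prop
    have hsub := intermediate_value_Icc (by norm_num : (4:ℝ) ≤ 5) hcont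
    have h0 : (0:ℝ) ∈ Set.Icc ((fun x : ℝ => x^3 - 8*x^2 + 17*x - 5) 4)
        ((fun x : ℝ => x^3 - 8*x^2 + 17*x - 5) 5) := by norm_num
    obtain ⟨r, hrmem, hr⟩ := hsub h0
    exact ⟨r, hrmem, hr⟩
  have hr4 : 4 < r := lt_of_le_of_ne hrmem.1 (by rintro rfl; norm_num at hr)
  have hr0 : (0:ℝ) ≤ r := by linarith
  set d₀ := Real.sqrt r with hd₀def
  have hd₀sq : d₀ ^ 2 = r := Real.sq_sqrt hr0
  have hd₀2 : 2 < d₀ := by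
    have h0 : 0 ≤ d₀ := Real.sqrt_nonneg r
    by_contra hc
    push_neg at hc
    have : d₀ ^ 2 ≤ 4 := by nlinarith
    linarith
  have hsex0 : d₀^6 - 8*d₀^4 + 17*d₀^2 - 5 = 0 := by
    have h4 : d₀^4 = r^2 := by rw [show d₀^4 = (d₀^2)^2 by ring, hd₀sq]
    have h6 : d₀^6 = r^3 := by rw [show d₀^6 = (d₀^2)^3 by ring, hd₀sq]
    rw [h6, h4, hd₀sq]; linarith
  -- Step 2: EHvec d₀ is an eigenvector with eigenvalue d₀, so d ≥ d₀ > 2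
  have hweig : H1adj.mulVec (EHvec d₀) = d₀ • EHvec d₀ := EHvec_eig d₀ hsex0
  have hwne : EHvec d₀ ≠ 0 := by
    intro h
    have h12 := congrFun h 12
    rw [show EHvec d₀ 12 = 1 from rfl, Pi.zero_apply] at h12
    exact one_ne_zero h12
  have hdd₀ : d₀ ≤ d := hmax d₀ ⟨EHvec d₀, hwne, hweig⟩
  have hd2 : 2 < d := lt_of_lt_of_le hd₀2 hdd₀
  have hdpos : (0:ℝ) < d := by linarith
  have hsq1 : (0:ℝ) < d^2 - 1 := by nlinarith
  have hsq2 : (0:ℝ) < d^2 - 2 := by nlinarith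
  have hd4 : 4 < d^2 := by nlinarith
  -- Step 3: extract the eigenvalue equations for the given eigenvector v
  obtain ⟨v, hvne, hv⟩ := hex
  have e0 := congrFun hv 0
  have e1 := congrFun hv 1
  have e2 := congrFun hv 2
  have e3 := congrFun hv 3
  have e4 := congrFun hv 4
  have e5 := congrFun hv 5
  have e6 := congrFun hv 6
  have e7 := congrFun hv 7
  have e8 := congrFun hv 8
  have e9 := congrFun hv 9
  have e10 := congrFun hv 10
  have e11 := congrFun hv 11
  have e12 := congrFun hv 12
  have e13 := congrFun hv 13
  simp (config := { decide := true }) [H1adj, H1edges, Matrix.mulVec, dotProduct,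
    Fin.sum_univ_succ, Fin.succ,
    show ((⟨3, by norm_num⟩ : Fin 14)) = 3 by rfl,
    show ((⟨4, by norm_num⟩ : Fin 14)) = 4 by rfl,
    show ((⟨5, by norm_num⟩ : Fin 14)) = 5 by rfl,
    show ((⟨6, by norm_num⟩ : Fin 14)) = 6 by rfl,
    show ((⟨7, by norm_num⟩ : Fin 14)) = 7 by rfl,
    show ((⟨8, by norm_num⟩ : Fin 14)) = 8 by rfl,
    show ((⟨9, by norm_num⟩ : Fin 14)) = 9 by rfl,
    show ((⟨10, by norm_num⟩ : Fin 14)) = 10 by rfl,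
    show ((⟨11, by norm_num⟩ : Fin 14)) = 11 by rfl,
    show ((⟨12, by norm_num⟩ : Fin 14)) = 12 by rfl,
    show ((⟨13, by norm_num⟩ : Fin 14)) = 13 by rfl]
    at e0 e1 e2 e3 e4 e5 e6 e7 e8 e9 e10 e11 e12 e13
  -- Step 4: propagate up the tree
  have hA : v 10 = d * v 12 := e12
  have hB : v 8 = (d^2 - 1) * v 12 := by linear_combination e10 + d * hA
  have hC : v 7 = (d^3 - 2*d) * v 12 := by linear_combination e8 + d * hB - hA
  have hA' : v 11 = d * v 13 := e13
  have hB' : v 9 = (d^2 - 1) * v 13 := by linear_combination e11 + d * hA'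
  have hC' : v 7 = (d^3 - 2*d) * v 13 := by linear_combination e9 + d * hB' - hA'
  have h1213 : v 13 = v 12 := by
    have hfac : (d^3 - 2*d) * (v 12 - v 13) = 0 := by linear_combination hC' - hC
    have hne : d^3 - 2*d ≠ 0 := by
      have h1 : 0 < d * (d^2 - 2) := mul_pos hdpos hsq2
      intro hz
      rw [show d^3 - 2*d = d * (d^2 - 2) by ring] at hz
      linarith
    have := (mul_eq_zero.mp hfac).resolve_left hne
    linarith [sub_eq_zero.mp this]
  have hD : v 6 = (d^4 - 4*d^2 + 2) * v 12 := by
    linear_combination e7 + d * hC - hB - hB' - (d^2 - 1) * h1213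
  have hE : v 5 = (d^5 - 5*d^3 + 4*d) * v 12 := by linear_combination e6 + d * hD - hC
  have hF : v 4 = (d^6 - 6*d^4 + 8*d^2 - 2) * v 12 := by linear_combination e5 + d * hE - hD
  have hG : v 3 = (d^7 - 7*d^5 + 13*d^3 - 6*d) * v 12 := by linear_combination e4 + d * hF - hE
  have hH : v 2 = (d^8 - 8*d^6 + 19*d^4 - 14*d^2 + 2) * v 12 := by
    linear_combination e3 + d * hG - hF
  have hI : v 1 = (d^9 - 9*d^7 + 26*d^5 - 27*d^3 + 8*d) * v 12 := by
    linear_combination e2 + d * hH - hG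
  have hJ : v 0 = (d^10 - 10*d^8 + 34*d^6 - 46*d^4 + 22*d^2 - 2) * v 12 := by
    linear_combination e1 + d * hI - hH
  have hP : (d * (d^2 - 1) * (d^2 - 2)) * ((d^6 - 8*d^4 + 17*d^2 - 5) * v 12) = 0 := by
    linear_combination hI - d * hJ - e0
  -- Step 5: v 12 ≠ 0
  have hv12 : v 12 ≠ 0 := by
    intro h12
    apply hvne
    funext i
    fin_cases i <;>
      simp [hJ, hI, hH, hG, hF, hE, hD, hC, hB, hA, hA', hB', h1213, h12]
  -- Step 6: conclude the sextic
  have hcoef : d * (d^2 - 1) * (d^2 - 2) ≠ 0 :=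
    (mul_pos (mul_pos hdpos hsq1) hsq2).ne'
  have h1 := (mul_eq_zero.mp hP).resolve_left hcoef
  have hsex := (mul_eq_zero.mp h1).resolve_right hv12
  have hcube : (d^2)^3 - 8*(d^2)^2 + 17*(d^2) - 5 = 0 := by linear_combination hsex
  exact ⟨hd2, hsex, by linear_combination hsex, fun x hx => cubic_le_max d x hd4 hcube hx⟩
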